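/- arXiv:1008.5241 — 4 statements merged into one kernel-verified Lean document; each statement's English description precedes it below -/
import Mathlib

section
/- Let A be a commutative Banach algebra that is topologically generated by its set of idempotent elements (i.e., the closed subalgebra generated by the idempotents is all of A). Then every continuous derivation D : A → X into a commutative Banach A-bimodule X is zero; in particular A is weakly amenable. -/
/-- A commutative Banach algebra that is topologically generated by its idempotents
has the property that every continuous derivation into a commutative Banach bimodule
is zero; in particular it is weakly amenable. -/
theorem weakly_amenable_of_generated_by_idempotents
    {A : Type*} [NonUnitalNormedCommRing A] [NormedSpace ℂ A]
    [IsScalarTower ℂ A A] [SMulCommClass ℂ A A] [CompleteSpace A]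
    -- A is topologically generated by its idempotent elements
    (hgen : closure (NonUnitalAlgebra.adjoin ℂ {p : A | p * p = p} : Set A) = Set.univ) :
    ∀ (X : Type) (_ : NormedAddCommGroup X) (_ : NormedSpace ℂ X) (_ : CompleteSpace X)
      (L R : A →L[ℂ] X →L[ℂ] X),
      (∀ a b x, L (a * b) x = L a (L b x)) →
      (∀ a b x, R (a * b) x = R b (R a x)) →
      (∀ a b x, R b (L a x) = L a (R b x)) →
      -- the bimodule is commutative : a·x = x·a
      (∀ a x, L a x = R a x) →
      ∀ (D : A →L[ℂ] X), (∀ a b, D (a * b) = L a (D b) + R b (D a)) →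
      D = 0 := by
  intro X _ _ _ L R hL hR hLR hcomm D hD
  -- D vanishes on idempotents
  have hidem : ∀ p : A, p * p = p → D p = 0 := by
    intro p hp
    have h1 : D p = L p (D p) + L p (D p) := by
      conv_lhs => rw [← hp]
      rw [hD, hcomm]
    have h2 : L p (D p) = L p (D p) + L p (D p) := by
      calc L p (D p) = L p (L p (D p) + L p (D p)) := by rw [← h1]
        _ = L p (L p (D p)) + L p (L p (D p)) := by rw [map_add]
        _ = L (p * p) (D p) + L (p * p) (D p) := by rw [hL]
        _ = L p (D p) + L p (D p) := by rw [hp]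
    have h3 : L p (D p) = 0 := by
      have h4 : L p (D p) + L p (D p) - L p (D p) = L p (D p) - L p (D p) := by
        rw [← h2]
      simpa using h4
    rw [h1, h3, add_zero]
  -- the kernel-like set is a closed non-unital subalgebra
  let S : NonUnitalSubalgebra ℂ A :=
    { carrier := {a : A | D a = 0}
      add_mem' := by
        intro a b ha hb
        simp only [Set.mem_setOf_eq] at *
        rw [map_add, ha, hb, add_zero]
      zero_mem' := by simp
      mul_mem' := by
        intro a b ha hb
        simp only [Set.mem_setOf_eq] at *
        rw [hD, ha, hb, map_zero, map_zero, add_zero]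
      smul_mem' := by
        intro c a ha
        simp only [Set.mem_setOf_eq] at *
        rw [map_smul, ha, smul_zero] }
  have hadj : (NonUnitalAlgebra.adjoin ℂ {p : A | p * p = p}) ≤ S :=
    NonUnitalAlgebra.adjoin_le (fun p hp => hidem p hp)
  have hclosed : IsClosed (S : Set A) := isClosed_eq D.continuous continuous_const
  have hsub : closure (NonUnitalAlgebra.adjoin ℂ {p : A | p * p = p} : Set A) ⊆ (S : Set A) :=
    closure_minimal hadj hclosed
  ext a
  have ha : a ∈ (S : Set A) := hsub (by rw [hgen]; trivial)
  exact ha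
end

section
/- Let N be a bounded normal operator on a Hilbert space H whose spectrum is σ = {0} ∪ {λₙ : n ≥ 1}, where (λₙ) is a sequence of positive reals converging to 0. For each n, let hₙ : σ → ℂ be the function with hₙ(λₙ) = 1/√λₙ and hₙ(z) = 0 for z ≠ λₙ. Then hₙ is continuous on σ and the operator on H ⊕ H given in block form by [[0, hₙ(N)], [0, N^{1/2} hₙ(N)]] is idempotent. -/
open ContinuousLinearMap in
/-- The block operator `[[A, B], [C, D]]` on `H ⊕ H`. -/
noncomputable def blockOp {H : Type*} [NormedAddCommGroup H] [InnerProductSpace ℂ H]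
    (A B C D : H →L[ℂ] H) : (H × H) →L[ℂ] (H × H) :=
  (A.comp (fst ℂ H H) + B.comp (snd ℂ H H)).prod (C.comp (fst ℂ H H) + D.comp (snd ℂ H H))

/-- For a bounded normal operator `N` with spectrum `{0} ∪ {λₙ}`, `λₙ > 0`, `λₙ → 0`,
the function `hₙ` equal to `1/√λₙ` at `λₙ` and `0` elsewhere is continuous on the spectrum,
and the block operator `[[0, hₙ(N)], [0, N^{1/2} hₙ(N)]]` is idempotent. -/
theorem block_hn_idempotent
    {H : Type*} [NormedAddCommGroup H] [InnerProductSpace ℂ H] [CompleteSpace H]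
    (l : ℕ → ℝ) (hpos : ∀ n, 0 < l n)
    (hlim : Filter.Tendsto l Filter.atTop (nhds 0))
    (N : H →L[ℂ] H) (hN : IsStarNormal N)
    (hspec : spectrum ℂ N = insert (0 : ℂ) (Set.range fun n => (l n : ℂ)))
    (n : ℕ) :
    ContinuousOn (fun z : ℂ => if z = (l n : ℂ) then ((Real.sqrt (l n))⁻¹ : ℂ) else 0)
      (spectrum ℂ N) ∧
    (let sqrtN : H →L[ℂ] H := cfc (fun z : ℂ => z ^ (1/2 : ℂ)) N
     let hnN : H →L[ℂ] H :=
       cfc (fun z : ℂ => if z = (l n : ℂ) then ((Real.sqrt (l n))⁻¹ : ℂ) else 0) N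
     let P := blockOp 0 hnN 0 (sqrtN * hnN)
     P * P = P) := by
  have hln := hpos n
  have hc0 : ((l n : ℂ)) ≠ 0 := by
    simp only [ne_eq, Complex.ofReal_eq_zero]
    exact hln.ne'
  -- continuity of h on the spectrum
  have hh : ContinuousOn
      (fun z : ℂ => if z = (l n : ℂ) then ((Real.sqrt (l n))⁻¹ : ℂ) else 0)
      (spectrum ℂ N) := by
    intro x hx
    by_cases hxc : x = (l n : ℂ)
    · subst hxc
      -- find K with l k < l n / 2 for k ≥ K
      have hev : ∀ᶠ k in Filter.atTop, l k < l n / 2 :=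
        hlim.eventually (gt_mem_nhds (half_pos hln))
      obtain ⟨K, hK⟩ := Filter.eventually_atTop.mp hev
      set F : Finset ℂ := ((Finset.range K).image (fun k => (l k : ℂ))) \ {(l n : ℂ)} with hF
      set F' : Finset ℂ := insert (0 : ℂ) F with hF'
      have hF'ne : F'.Nonempty := Finset.insert_nonempty _ _
      have hFne : ∀ z ∈ F', z ≠ (l n : ℂ) := by
        intro z hz
        rcases Finset.mem_insert.mp hz with rfl | hz
        · exact fun hzc => hc0 hzc.symm
        · exact fun hzc => (Finset.mem_sdiff.mp hz).2 (by simp [hzc])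
      set ε : ℝ := min (l n / 2) (F'.inf' hF'ne (fun z => dist ((l n : ℂ)) z)) with hε
      have hεpos : 0 < ε := by
        refine lt_min (half_pos hln) ?_
        rw [Finset.lt_inf'_iff]
        intro z hz
        rw [dist_pos]
        exact fun hzc => hFne z hz hzc.symm
      have key : ∀ z ∈ spectrum ℂ N, dist ((l n : ℂ)) z < ε → z = (l n : ℂ) := by
        intro z hz hdz
        rw [hspec] at hz
        rcases hz with rfl | ⟨k, rfl⟩
        · exfalso
          have h0 : (0 : ℂ) ∈ F' := Finset.mem_insert_self _ _
          have h2 : ε ≤ dist ((l n : ℂ)) (0 : ℂ) :=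
            le_trans (min_le_right _ _) (Finset.inf'_le _ h0)
          exact absurd hdz (not_lt.mpr h2)
        · by_cases hkc : (l k : ℂ) = (l n : ℂ)
          · exact hkc
          · exfalso
            have hdz' : dist ((l n : ℂ)) ((l k : ℂ)) < ε := hdz
            by_cases hkK : k < K
            · have hmem : (l k : ℂ) ∈ F' := by
                refine Finset.mem_insert_of_mem ?_
                rw [Finset.mem_sdiff]
                exact ⟨Finset.mem_image.mpr ⟨k, Finset.mem_range.mpr hkK, rfl⟩, by simp [hkc]⟩
              have h2 : ε ≤ dist ((l n : ℂ)) ((l k : ℂ)) :=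
                le_trans (min_le_right _ _) (Finset.inf'_le _ hmem)
              exact absurd hdz' (not_lt.mpr h2)
            · have hk2 : l k < l n / 2 := hK k (le_of_not_gt hkK)
              have hd : dist ((l n : ℂ)) ((l k : ℂ)) = |l n - l k| := by
                rw [Complex.dist_eq, ← Complex.ofReal_sub, Complex.norm_real, Real.norm_eq_abs]
              have h1 : ε ≤ l n / 2 := min_le_left _ _
              rw [hd, abs_of_pos (by linarith)] at hdz'
              linarith
      have hevq : ∀ᶠ z in nhdsWithin ((l n : ℂ)) (spectrum ℂ N),
          (if z = (l n : ℂ) then ((Real.sqrt (l n))⁻¹ : ℂ) else 0) = ((Real.sqrt (l n))⁻¹ : ℂ) := by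
        filter_upwards [nhdsWithin_le_nhds (Metric.ball_mem_nhds _ hεpos),
          self_mem_nhdsWithin] with z hz1 hz2
        rw [if_pos (key z hz2 (by rwa [Metric.mem_ball, dist_comm] at hz1))]
      exact (continuousWithinAt_const (b := ((Real.sqrt (l n))⁻¹ : ℂ))).congr_of_eventuallyEq
        hevq (by simp)
    · have hd : 0 < dist x ((l n : ℂ)) := dist_pos.mpr hxc
      have hevq : ∀ᶠ z in nhdsWithin x (spectrum ℂ N),
          (if z = (l n : ℂ) then ((Real.sqrt (l n))⁻¹ : ℂ) else 0) = (0 : ℂ) := by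
        filter_upwards [nhdsWithin_le_nhds (Metric.ball_mem_nhds x hd)] with z hz
        rw [if_neg]
        intro hzc
        subst hzc
        rw [Metric.mem_ball, dist_comm] at hz
        exact absurd hz (lt_irrefl _)
      exact (continuousWithinAt_const (b := (0 : ℂ))).congr_of_eventuallyEq hevq
        (by simp [hxc])
  refine ⟨hh, ?_⟩
  intro sqrtN hnN P
  -- continuity of the square root on the spectrum
  have hre : ∀ z ∈ spectrum ℂ N, 0 ≤ z.re := by
    rw [hspec]
    rintro z (rfl | ⟨k, rfl⟩)
    · simp
    · simp [(hpos k).le]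
  have hs : ContinuousOn (fun z : ℂ => z ^ (1/2 : ℂ)) (spectrum ℂ N) := by
    intro z hz
    exact (Complex.continuousAt_cpow_const_of_re_pos (Or.inl (hre z hz))
      (by norm_num)).continuousWithinAt
  have hsh : ContinuousOn
      (fun z : ℂ => z ^ (1/2 : ℂ) * if z = (l n : ℂ) then ((Real.sqrt (l n))⁻¹ : ℂ) else 0)
      (spectrum ℂ N) := hs.mul hh
  have hval : ((l n : ℂ)) ^ (1/2 : ℂ) = (Real.sqrt (l n) : ℂ) := by
    rw [show ((1:ℂ)/2) = ((1/2:ℝ):ℂ) by norm_num, ← Complex.ofReal_cpow hln.le,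
      Real.sqrt_eq_rpow]
  have hsq : (Real.sqrt (l n) : ℂ) ≠ 0 := by
    exact_mod_cast (Real.sqrt_pos.mpr hln).ne'
  have hD : sqrtN * hnN =
      cfc (fun z : ℂ =>
        z ^ (1/2 : ℂ) * if z = (l n : ℂ) then ((Real.sqrt (l n))⁻¹ : ℂ) else 0) N :=
    (cfc_mul _ _ N hs hh).symm
  have hBD : hnN * (sqrtN * hnN) = hnN := by
    rw [hD, ← cfc_mul _ _ N hh hsh]
    refine cfc_congr fun z hz => ?_
    by_cases hzc : z = (l n : ℂ)
    · subst hzc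
      simp only [if_pos rfl, hval]
      field_simp
      simp only [if_true]
      field_simp
    · simp [if_neg hzc]
  have hDD : (sqrtN * hnN) * (sqrtN * hnN) = sqrtN * hnN := by
    rw [hD, ← cfc_mul _ _ N hsh hsh]
    refine cfc_congr fun z hz => ?_
    by_cases hzc : z = (l n : ℂ)
    · subst hzc
      simp only [if_pos rfl, hval]
      field_simp
      simp only [if_true]
      field_simp
    · simp [if_neg hzc]
  have hP : ∀ v : H × H, P v = (hnN v.2, (sqrtN * hnN) v.2) := by
    intro v
    simp [P, blockOp]
  refine ContinuousLinearMap.ext fun v => ?_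
  rw [ContinuousLinearMap.mul_apply, hP, hP]
  refine Prod.ext ?_ ?_
  · simpa [ContinuousLinearMap.mul_apply] using DFunLike.congr_fun hBD v.2
  · simpa [ContinuousLinearMap.mul_apply] using DFunLike.congr_fun hDD v.2
end

section
/- Let σ ⊆ [0, ∞) be compact with 0 ∈ σ. Suppose (qₖ) is a sequence in C(σ) with supₖ ‖qₖ‖∞ ≤ M and ‖z·qₖ(z) − z‖∞ → 0 on σ. Then for every f ∈ C(σ) with f(0) = 0, ‖f·qₖ − f‖∞ → 0. -/
open Filter

/-- Let `σ ⊆ [0, ∞)` be compact with `0 ∈ σ`. If `(qₖ)` in `C(σ, ℂ)` is uniformly bounded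
and `z qₖ(z) → z` uniformly on `σ`, then `f qₖ → f` uniformly for every `f ∈ C(σ, ℂ)` with
`f(0) = 0`. -/
theorem mul_approx_identity_on_sigma
    (σ : Set ℝ) (hσ : IsCompact σ) (hσ0 : (0 : ℝ) ∈ σ) (hσpos : ∀ x ∈ σ, 0 ≤ x)
    (q : ℕ → C(↥σ, ℂ)) (M : ℝ) (hbdd : ∀ k, ∀ x : ↥σ, ‖q k x‖ ≤ M)
    (happrox : TendstoUniformly (fun k (x : ↥σ) => ((x : ℝ) : ℂ) * q k x)
      (fun x : ↥σ => ((x : ℝ) : ℂ)) atTop) :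
    ∀ f : C(↥σ, ℂ), f ⟨0, hσ0⟩ = 0 →
      TendstoUniformly (fun k (x : ↥σ) => f x * q k x) (fun x => f x) atTop := by
  haveI : CompactSpace ↥σ := isCompact_iff_compactSpace.mp hσ
  intro f hf0
  rw [Metric.tendstoUniformly_iff]
  intro ε hε
  have hM0 : 0 ≤ M := le_trans (norm_nonneg _) (hbdd 0 ⟨0, hσ0⟩)
  obtain ⟨δ, hδ, hδf⟩ : ∃ δ > 0, ∀ x : ↥σ, dist x ⟨0, hσ0⟩ < δ → ‖f x‖ < ε / (2 * (M + 1)) := by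
    have hc := Metric.continuousAt_iff.mp (f.continuous.continuousAt (x := ⟨0, hσ0⟩))
    obtain ⟨δ, hδ, h⟩ := hc (ε / (2 * (M + 1))) (by positivity)
    exact ⟨δ, hδ, fun x hx => by simpa [hf0, dist_eq_norm] using h hx⟩
  set ε1 := (ε / 2) * δ / (‖f‖ + 1) with hε1def
  have hε1 : 0 < ε1 := by positivity
  have H := (Metric.tendstoUniformly_iff.mp happrox) ε1 hε1
  filter_upwards [H] with k hk x
  have hx0 : 0 ≤ (x : ℝ) := hσpos x x.2
  have hfx : ‖f x‖ ≤ ‖f‖ := f.norm_coe_le_norm x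
  have key : dist (f x) (f x * q k x) = ‖f x‖ * ‖1 - q k x‖ := by
    rw [dist_eq_norm, show f x - f x * q k x = f x * (1 - q k x) by ring, norm_mul]
  by_cases hcase : (x : ℝ) < δ
  · have hdx : dist x (⟨0, hσ0⟩ : ↥σ) < δ := by
      rw [Subtype.dist_eq, Real.dist_eq]
      simpa [abs_of_nonneg hx0] using hcase
    have hfsmall : ‖f x‖ < ε / (2 * (M + 1)) := hδf x hdx
    have h1 : ‖1 - q k x‖ ≤ M + 1 := by
      calc ‖1 - q k x‖ ≤ ‖(1 : ℂ)‖ + ‖q k x‖ := norm_sub_le _ _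
        _ ≤ 1 + M := by simpa using hbdd k x
        _ = M + 1 := by ring
    rw [key]
    calc ‖f x‖ * ‖1 - q k x‖ ≤ (ε / (2 * (M + 1))) * (M + 1) :=
          mul_le_mul hfsmall.le h1 (norm_nonneg _) (by positivity)
      _ = ε / 2 := by field_simp
      _ < ε := by linarith
  · push_neg at hcase
    have hq : ‖1 - q k x‖ ≤ ε1 / δ := by
      have h2 := hk x
      rw [dist_eq_norm, show ((x : ℝ) : ℂ) - (x : ℝ) * q k x = (x : ℝ) * (1 - q k x) by ring,
        norm_mul] at h2
      have hxn : ‖((x : ℝ) : ℂ)‖ = (x : ℝ) := by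
        simp [abs_of_nonneg hx0]
      rw [hxn] at h2
      rw [le_div_iff₀ hδ]
      nlinarith [norm_nonneg (1 - q k x)]
    rw [key]
    have hfn : (0 : ℝ) ≤ ‖f‖ := norm_nonneg f
    calc ‖f x‖ * ‖1 - q k x‖ ≤ ‖f‖ * (ε1 / δ) :=
          mul_le_mul hfx hq (norm_nonneg _) hfn
      _ = (‖f‖ / (‖f‖ + 1)) * (ε / 2) := by
          rw [hε1def]; field_simp
      _ < ε := by
          have h1 : ‖f‖ / (‖f‖ + 1) ≤ 1 := by
            rw [div_le_one (by positivity)]; linarith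
          nlinarith
end

section
/- Let N be a bounded normal operator on H with spectrum σ = {0} ∪ {λₙ : n ≥ 1}, λₙ > 0, λₙ → 0, and let T = [[0, N^{1/2}], [0, N]] on H ⊕ H. Then for each fixed n, the norm-closed algebra A_{λₙI − T} generated by positive powers of λₙI − T has a bounded approximate identity. -/
open Filter
set_option synthInstance.maxHeartbeats 1000000

section blockLemmas
variable {H : Type*} [NormedAddCommGroup H] [InnerProductSpace ℂ H]

theorem blockOp_apply (A B C D : H →L[ℂ] H) (z : H × H) :
    blockOp A B C D z = (A z.1 + B z.2, C z.1 + D z.2) := rfl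

theorem blockOp_mul (A B D A' B' D' : H →L[ℂ] H) :
    blockOp A B 0 D * blockOp A' B' 0 D' = blockOp (A * A') (A * B' + B * D') 0 (D * D') := by
  ext z <;> simp [blockOp_apply, ContinuousLinearMap.mul_apply, map_add] <;> abel

theorem blockOp_one : (1 : (H × H) →L[ℂ] (H × H)) = blockOp 1 0 0 1 := by
  ext z <;> simp [blockOp_apply]

theorem blockOp_smul (c : ℂ) (A B D : H →L[ℂ] H) :
    c • blockOp A B 0 D = blockOp (c • A) (c • B) 0 (c • D) := by
  ext z <;> simp [blockOp_apply]

theorem blockOp_sub (A B D A' B' D' : H →L[ℂ] H) :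
    blockOp A B 0 D - blockOp A' B' 0 D' = blockOp (A - A') (B - B') 0 (D - D') := by
  ext z <;> simp [blockOp_apply] <;> abel

theorem blockOp_norm_le (A B D : H →L[ℂ] H) :
    ‖blockOp A B 0 D‖ ≤ ‖A‖ + ‖B‖ + ‖D‖ := by
  refine ContinuousLinearMap.opNorm_le_bound _ (by positivity) fun z => ?_
  rw [blockOp_apply]
  rw [Prod.norm_def]
  simp only [ContinuousLinearMap.zero_apply, zero_add]
  apply max_le
  · calc ‖A z.1 + B z.2‖ ≤ ‖A z.1‖ + ‖B z.2‖ := norm_add_le _ _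
      _ ≤ ‖A‖ * ‖z.1‖ + ‖B‖ * ‖z.2‖ := by
          gcongr <;> [exact A.le_opNorm z.1; exact B.le_opNorm z.2]
      _ ≤ ‖A‖ * ‖z‖ + ‖B‖ * ‖z‖ := by
          gcongr <;> [exact norm_fst_le z; exact norm_snd_le z]
      _ ≤ (‖A‖ + ‖B‖ + ‖D‖) * ‖z‖ := by nlinarith [norm_nonneg D, norm_nonneg z]
  · calc ‖D z.2‖ ≤ ‖D‖ * ‖z.2‖ := D.le_opNorm z.2
      _ ≤ ‖D‖ * ‖z‖ := by gcongr; exact norm_snd_le z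
      _ ≤ (‖A‖ + ‖B‖ + ‖D‖) * ‖z‖ := by nlinarith [norm_nonneg A, norm_nonneg B, norm_nonneg z]

end blockLemmas

/-- Real version of the top-right coefficient recursion. -/
noncomputable def cSeqR (lam a : ℝ) : ℕ → ℝ → ℝ
  | 0 => fun _ => -1
  | (k+1) => fun x => (1 - a * lam ^ 2) * cSeqR lam a k x
      + (a * (2 * lam - x)) * ((lam - x) * (1 - a * (lam - x) ^ 2) ^ k)

/-- Complex version of the top-right coefficient recursion. -/
noncomputable def cSeqC (lam a : ℂ) : ℕ → ℂ → ℂ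
  | 0 => fun _ => -1
  | (k+1) => fun z => (1 - a * lam ^ 2) * cSeqC lam a k z
      + (a * (2 * lam - z)) * ((lam - z) * (1 - a * (lam - z) ^ 2) ^ k)

theorem cSeqC_coe (lam a : ℝ) (k : ℕ) (x : ℝ) :
    cSeqC (lam : ℂ) (a : ℂ) k (x : ℂ) = ((cSeqR lam a k x : ℝ) : ℂ) := by
  induction k with
  | zero => simp [cSeqC, cSeqR]
  | succ k ih => simp only [cSeqC, cSeqR, ih]; push_cast; ring

theorem cSeqC_continuous (lam a : ℂ) (k : ℕ) : Continuous (cSeqC lam a k) := by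
  induction k with
  | zero => simpa [cSeqC] using continuous_const
  | succ k ih => unfold cSeqC; fun_prop

/-- bound on the `d`-entries. -/
theorem dR_bound (lam a δ W x : ℝ) (hδ : 0 < δ) (ha : 0 ≤ a)
    (hδW : δ ≤ W) (hW : |lam - x| ≤ W) (haW : a * W ^ 2 ≤ 1)
    (hfar : x = lam ∨ δ ≤ |lam - x|) (k : ℕ) :
    |(lam - x) * (1 - a * (lam - x) ^ 2) ^ k| ≤ W * (1 - a * δ ^ 2) ^ k := by
  have hW0 : 0 ≤ W := le_trans hδ.le hδW
  have hδ2 : δ ^ 2 ≤ W ^ 2 := pow_le_pow_left₀ hδ.le hδW 2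
  have hρ0 : 0 ≤ 1 - a * δ ^ 2 := by nlinarith [mul_le_mul_of_nonneg_left hδ2 ha]
  rcases hfar with h | h
  · subst h
    simp [sub_self]
    positivity
  · have h1 : (lam - x) ^ 2 ≤ W ^ 2 := by
      rw [← sq_abs]; exact pow_le_pow_left₀ (abs_nonneg _) hW 2
    have h2 : δ ^ 2 ≤ (lam - x) ^ 2 := by
      rw [← sq_abs (lam - x)]; exact pow_le_pow_left₀ hδ.le h 2
    have h3 : 0 ≤ 1 - a * (lam - x) ^ 2 := by nlinarith
    have h4 : 1 - a * (lam - x) ^ 2 ≤ 1 - a * δ ^ 2 := by nlinarith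
    rw [abs_mul, abs_pow, abs_of_nonneg h3]
    have := pow_le_pow_left₀ h3 h4 k
    calc |lam - x| * (1 - a * (lam - x) ^ 2) ^ k
        ≤ W * (1 - a * δ ^ 2) ^ k := by
          apply mul_le_mul hW this (by positivity) hW0

/-- bound on the `c`-entries. -/
theorem cR_bound (lam a δ W β C2a ρ x : ℝ)
    (hρ : 0 ≤ ρ) (hβ0 : 0 ≤ β)
    (hr0 : |1 - a * lam ^ 2| ≤ ρ)
    (hd : ∀ k : ℕ, |(lam - x) * (1 - a * (lam - x) ^ 2) ^ k| ≤ W * ρ ^ k)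
    (hc2 : |a * (2 * lam - x)| ≤ C2a) (hW0 : 0 ≤ W)
    (hβ : C2a * W ≤ β * ρ) (k : ℕ) :
    |cSeqR lam a k x| ≤ (1 + β * k) * ρ ^ k := by
  induction k with
  | zero => simp [cSeqR]
  | succ k ih =>
    have hρk : (0:ℝ) ≤ ρ ^ k := by positivity
    have h1 : |cSeqR lam a (k+1) x| ≤ |1 - a * lam ^ 2| * |cSeqR lam a k x|
        + |a * (2 * lam - x)| * |(lam - x) * (1 - a * (lam - x) ^ 2) ^ k| := by
      rw [cSeqR]
      calc _ ≤ |(1 - a * lam ^ 2) * cSeqR lam a k x|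
            + |(a * (2 * lam - x)) * ((lam - x) * (1 - a * (lam - x) ^ 2) ^ k)| := abs_add_le _ _
        _ = _ := by rw [abs_mul, abs_mul]
    have h2 : |1 - a * lam ^ 2| * |cSeqR lam a k x| ≤ ρ * ((1 + β * k) * ρ ^ k) := by
      apply mul_le_mul hr0 ih (abs_nonneg _) hρ
    have h3 : |a * (2 * lam - x)| * |(lam - x) * (1 - a * (lam - x) ^ 2) ^ k|
        ≤ C2a * (W * ρ ^ k) := by
      apply mul_le_mul hc2 (hd k) (abs_nonneg _) ((abs_nonneg _).trans hc2)
    have h4 : C2a * (W * ρ ^ k) ≤ β * ρ * ρ ^ k := by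
      rw [← mul_assoc]; exact mul_le_mul_of_nonneg_right hβ hρk
    calc |cSeqR lam a (k+1) x| ≤ ρ * ((1 + β * k) * ρ ^ k) + β * ρ * ρ ^ k := by
          refine h1.trans (add_le_add h2 (h3.trans h4))
      _ ≤ (1 + β * ((k:ℝ) + 1)) * ρ ^ (k+1) := by
          have hρρk : ρ * ρ ^ k = ρ ^ (k+1) := (pow_succ' ρ k).symm
          nlinarith [mul_le_mul_of_nonneg_left hρk hρ, mul_nonneg hβ0 (Nat.cast_nonneg k : (0:ℝ) ≤ k)]
      _ = (1 + β * (↑(k + 1))) * ρ ^ (k+1) := by push_cast; ring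


section stdOpLemmas
variable {H : Type*} [NormedAddCommGroup H] [InnerProductSpace ℂ H] [CompleteSpace H]

/-- standard upper-triangular form with scalar top-left entry `α`, top-right `R * cfc c N`,
and bottom-right `cfc d N`. -/
noncomputable def stdOp (R N : H →L[ℂ] H) (α : ℂ) (c d : ℂ → ℂ) : (H × H) →L[ℂ] (H × H) :=
  blockOp (α • 1) (R * cfc c N) 0 (cfc d N)

theorem stdOp_mul (R N : H →L[ℂ] H) (α α' : ℂ) (c d c' d' : ℂ → ℂ)
    (hc : Continuous c) (hd : Continuous d) (hc' : Continuous c') (hd' : Continuous d') :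
    stdOp R N α c d * stdOp R N α' c' d'
      = stdOp R N (α * α') (fun z => α * c' z + c z * d' z) (fun z => d z * d' z) := by
  unfold stdOp
  rw [blockOp_mul]
  congr 1
  · rw [smul_mul_smul_comm, mul_one]
  · rw [cfc_add N (fun z => α * c' z) (fun z => c z * d' z)
        ((continuous_const.mul hc').continuousOn) ((hc.mul hd').continuousOn),
      cfc_const_mul α c' N hc'.continuousOn,
      cfc_mul c d' N hc.continuousOn hd'.continuousOn,
      mul_add, smul_mul_assoc, one_mul, mul_smul_comm, mul_assoc]
  · rw [cfc_mul d d' N hd.continuousOn hd'.continuousOn]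

theorem stdOp_smul (R N : H →L[ℂ] H) (r α : ℂ) (c d : ℂ → ℂ)
    (hc : Continuous c) (hd : Continuous d) :
    r • stdOp R N α c d = stdOp R N (r * α) (fun z => r * c z) (fun z => r * d z) := by
  unfold stdOp
  rw [blockOp_smul]
  congr 1
  · rw [smul_smul]
  · rw [cfc_const_mul r c N hc.continuousOn, mul_smul_comm]
  · rw [cfc_const_mul r d N hd.continuousOn]

theorem stdOp_sub (R N : H →L[ℂ] H) (α α' : ℂ) (c d c' d' : ℂ → ℂ)
    (hc : Continuous c) (hd : Continuous d) (hc' : Continuous c') (hd' : Continuous d') :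
    stdOp R N α c d - stdOp R N α' c' d'
      = stdOp R N (α - α') (fun z => c z - c' z) (fun z => d z - d' z) := by
  unfold stdOp
  rw [blockOp_sub]
  congr 1
  · rw [sub_smul]
  · rw [cfc_sub c c' N hc.continuousOn hc'.continuousOn, mul_sub]
  · rw [cfc_sub d d' N hd.continuousOn hd'.continuousOn]

theorem stdOp_one (R N : H →L[ℂ] H) (hN : IsStarNormal N) :
    (1 : (H × H) →L[ℂ] (H × H)) = stdOp R N 1 (fun _ => 0) (fun _ => 1) := by
  unfold stdOp
  rw [cfc_const_zero, cfc_const_one ℂ N, mul_zero, one_smul, blockOp_one]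

theorem stdOp_congr (R N : H →L[ℂ] H) (α α' : ℂ) (c d c' d' : ℂ → ℂ)
    (hα : α = α') (hc : ∀ z, c z = c' z) (hd : ∀ z, d z = d' z) :
    stdOp R N α c d = stdOp R N α' c' d' := by
  rw [hα, funext hc, funext hd]

theorem stdOp_norm_le (R N : H →L[ℂ] H) (α : ℂ) (c d : ℂ → ℂ) :
    ‖stdOp R N α c d‖ ≤ ‖α‖ + ‖R‖ * ‖cfc c N‖ + ‖cfc d N‖ := by
  refine (blockOp_norm_le _ _ _).trans ?_
  gcongr
  · calc ‖α • (1 : H →L[ℂ] H)‖ = ‖α‖ * ‖(1 : H →L[ℂ] H)‖ := norm_smul _ _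
      _ ≤ ‖α‖ * 1 := by gcongr; exact ContinuousLinearMap.norm_id_le
      _ = ‖α‖ := mul_one _
  · exact norm_mul_le _ _

end stdOpLemmas


set_option maxHeartbeats 2000000
set_option synthInstance.maxHeartbeats 1000000

/-- For `T = [[0, N^{1/2}], [0, N]]` and each fixed `n`, the norm-closed algebra generated
by the positive powers of `λₙ I − T` has a bounded approximate identity. -/
theorem bai_for_A_lambda_sub_T
    {H : Type*} [NormedAddCommGroup H] [InnerProductSpace ℂ H] [CompleteSpace H]
    (l : ℕ → ℝ) (hpos : ∀ n, 0 < l n)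
    (hlim : Tendsto l atTop (nhds 0))
    (N : H →L[ℂ] H) (hN : IsStarNormal N)
    (hspec : spectrum ℂ N = insert (0 : ℂ) (Set.range fun n => (l n : ℂ)))
    (sqrtN : H →L[ℂ] H) (hsqrt : sqrtN = cfc (fun z : ℂ => z ^ (1/2 : ℂ)) N)
    (T : (H × H) →L[ℂ] (H × H)) (hT : T = blockOp 0 sqrtN 0 N)
    (n : ℕ) :
    ∃ (e : ℕ → ((H × H) →L[ℂ] (H × H))) (C : ℝ),
      (∀ k, ‖e k‖ ≤ C) ∧
      (∀ k, e k ∈ closure (Submodule.span ℂ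
        {S : (H × H) →L[ℂ] (H × H) | ∃ m : ℕ, 1 ≤ m ∧ S = ((l n : ℂ) • 1 - T) ^ m} : Set _)) ∧
      (∀ a ∈ closure (Submodule.span ℂ
        {S : (H × H) →L[ℂ] (H × H) | ∃ m : ℕ, 1 ≤ m ∧ S = ((l n : ℂ) • 1 - T) ^ m} : Set _),
        Tendsto (fun k => e k * a) atTop (nhds a)) := by
  -- notation
  set S : (H × H) →L[ℂ] (H × H) := (l n : ℂ) • 1 - T with hSdef
  set R : H →L[ℂ] H := sqrtN with hRdef
  haveI hbsmul := NormedSpace.toIsBoundedSMul (𝕜 := ℂ) (E := (H × H) →L[ℂ] (H × H))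
  have hlam : 0 < l n := hpos n
  -- the upper bound Lb on the sequence l
  obtain ⟨K₁, hK₁⟩ : ∃ K, ∀ m, K ≤ m → l m < 1 := by
    have := (Metric.tendsto_atTop.mp hlim) 1 one_pos
    obtain ⟨K, hK⟩ := this
    exact ⟨K, fun m hm => by have := hK m hm; rwa [Real.dist_eq, sub_zero, abs_of_pos (hpos m)] at this⟩
  set Lb : ℝ := 1 + ∑ m ∈ Finset.range K₁, l m with hLbdef
  have hsum0 : (0:ℝ) ≤ ∑ m ∈ Finset.range K₁, l m :=
    Finset.sum_nonneg fun m _ => (hpos m).le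
  have hLb : ∀ m, l m ≤ Lb := by
    intro m
    by_cases hm : m < K₁
    · have : l m ≤ ∑ j ∈ Finset.range K₁, l j :=
        Finset.single_le_sum (fun j _ => (hpos j).le) (Finset.mem_range.mpr hm)
      linarith
    · have := hK₁ m (not_lt.mp hm)
      linarith
  have hLb0 : (0:ℝ) ≤ Lb := by linarith
  have hlamLb : l n ≤ Lb := hLb n
  -- the isolation radius δ
  obtain ⟨K₂, hK₂⟩ : ∃ K, ∀ m, K ≤ m → l m < l n / 2 := by
    have := (Metric.tendsto_atTop.mp hlim) (l n / 2) (by positivity)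
    obtain ⟨K, hK⟩ := this
    exact ⟨K, fun m hm => by have := hK m hm; rwa [Real.dist_eq, sub_zero, abs_of_pos (hpos m)] at this⟩
  have hne : (Finset.range (K₂+1)).Nonempty := ⟨0, Finset.mem_range.mpr (Nat.succ_pos _)⟩
  set δ : ℝ := min (l n / 2)
      ((Finset.range (K₂+1)).inf' hne fun m => if l m = l n then l n else |l n - l m|) with hδdef
  have hδpos : 0 < δ := by
    apply lt_min (by positivity)
    rw [Finset.lt_inf'_iff]
    intro m _
    by_cases h : l m = l n
    · simp [h, hlam]
    · simp only [if_neg h]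
      exact abs_pos.mpr (sub_ne_zero.mpr (fun hc => h hc.symm))
  have hδlam : δ ≤ l n := (min_le_left _ _).trans (by linarith)
  have hδfar : ∀ m, l m ≠ l n → δ ≤ |l n - l m| := by
    intro m hm
    by_cases h : m ≤ K₂
    · have hmem : m ∈ Finset.range (K₂+1) := Finset.mem_range.mpr (Nat.lt_succ_of_le h)
      have := Finset.inf'_le (fun m => if l m = l n then l n else |l n - l m|) hmem
      rw [if_neg hm] at this
      exact (min_le_right _ _).trans this
    · have h2 := hK₂ m (le_of_not_ge h)
      have : l n / 2 ≤ |l n - l m| := by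
        rw [abs_of_pos (by linarith)]; linarith
      exact (min_le_left _ _).trans this
  -- constants
  set W : ℝ := l n + Lb with hWdef
  have hW0 : 0 < W := by positivity
  set a : ℝ := 1 / (W + 1) ^ 2 with hadef
  have ha : 0 < a := by positivity
  have haW : a * W ^ 2 ≤ 1 := by
    rw [hadef, one_div, inv_mul_eq_div, div_le_one (by positivity)]
    nlinarith
  have haWlt : a * W ^ 2 < 1 := by
    rw [hadef, one_div, inv_mul_eq_div, div_lt_one (by positivity)]
    nlinarith
  have hδW : δ ≤ W := hδlam.trans (by linarith)
  set ρ : ℝ := 1 - a * δ ^ 2 with hρdef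
  have hρ0 : 0 < ρ := by
    have h1 : δ ^ 2 ≤ W ^ 2 := pow_le_pow_left₀ hδpos.le hδW 2
    have := mul_le_mul_of_nonneg_left h1 ha.le
    simp only [hρdef]; nlinarith
  have hρ1 : ρ < 1 := by
    have : 0 < a * δ ^ 2 := by positivity
    simp only [hρdef]; linarith
  have hr0a : 0 ≤ 1 - a * (l n) ^ 2 := by
    have h1 : (l n) ^ 2 ≤ W ^ 2 := pow_le_pow_left₀ hlam.le (by linarith) 2
    nlinarith
  have hr0ρ : 1 - a * (l n) ^ 2 ≤ ρ := by
    have h1 : δ ^ 2 ≤ (l n) ^ 2 := pow_le_pow_left₀ hδpos.le hδlam 2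
    simp only [hρdef]; nlinarith
  set C2a : ℝ := a * (2 * l n + Lb) with hC2adef
  have hC2a0 : 0 ≤ C2a := by positivity
  set β : ℝ := C2a * W / ρ with hβdef
  have hβ0 : 0 ≤ β := by positivity
  have hβρ : C2a * W ≤ β * ρ := by
    rw [hβdef, div_mul_cancel₀ _ (ne_of_gt hρ0)]
  -- spectrum facts: every element of σ(N) is a real x with the needed properties
  have hspec' : ∀ x ∈ spectrum ℂ N, ∃ r : ℝ, x = (r : ℂ) ∧ 0 ≤ r ∧ r ≤ Lb ∧
      (r = l n ∨ δ ≤ |l n - r|) := by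
    intro x hx
    rw [hspec] at hx
    rcases hx with h0 | ⟨m, hm⟩
    · refine ⟨0, by simp [h0], le_refl _, hLb0, Or.inr ?_⟩
      rw [sub_zero, abs_of_pos hlam]; exact hδlam
    · refine ⟨l m, hm.symm ▸ rfl, (hpos m).le, hLb m, ?_⟩
      by_cases h : l m = l n
      · exact Or.inl h
      · exact Or.inr (hδfar m h)
    -- ## The operator identities
  -- S in standard form
  have hS' : S = stdOp R N (l n : ℂ) (fun _ => (-1 : ℂ)) (fun z => (l n : ℂ) - z) := by
    rw [hSdef, hT]
    have h1 : (l n : ℂ) • (1 : (H × H) →L[ℂ] (H × H))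
        = blockOp ((l n : ℂ) • (1 : H →L[ℂ] H)) 0 0 ((l n : ℂ) • 1) := by
      rw [blockOp_one (H := H), blockOp_smul]
      simp
    have e1 : (0 : H →L[ℂ] H) - R = R * cfc (fun _ => (-1 : ℂ)) N := by
      rw [cfc_const (-1 : ℂ) N, Algebra.algebraMap_eq_smul_one, mul_smul_comm, mul_one,
        neg_smul, one_smul, zero_sub]
    have e2 : (l n : ℂ) • (1 : H →L[ℂ] H) - N = cfc (fun z => (l n : ℂ) - z) N := by
      rw [cfc_sub (fun _ => (l n : ℂ)) (fun z => z) N continuousOn_const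
        continuous_id.continuousOn, cfc_const (l n : ℂ) N, cfc_id' ℂ N,
        Algebra.algebraMap_eq_smul_one]
    rw [h1, blockOp_sub, e1, e2]
    unfold stdOp
    rw [sub_zero]
  -- the operator B
  set B : (H × H) →L[ℂ] (H × H) := 1 - (a : ℂ) • (S * S) with hBdef
  have hB' : B = stdOp R N (1 - (a:ℂ) * (l n : ℂ)^2) (fun z => (a:ℂ) * (2 * (l n : ℂ) - z))
      (fun z => 1 - (a:ℂ) * ((l n : ℂ) - z)^2) := by
    rw [hBdef]
    rw [show S * S = stdOp R N ((l n : ℂ) * (l n : ℂ))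
        (fun z => (l n : ℂ) * (-1) + (-1) * ((l n : ℂ) - z))
        (fun z => ((l n : ℂ) - z) * ((l n : ℂ) - z)) by
      rw [hS', stdOp_mul _ _ _ _ _ _ _ _ (by fun_prop) (by fun_prop) (by fun_prop) (by fun_prop)]]
    rw [stdOp_smul _ _ _ _ _ _ (by fun_prop) (by fun_prop), stdOp_one R N hN,
      stdOp_sub _ _ _ _ _ _ _ _ (by fun_prop) (by fun_prop) (by fun_prop) (by fun_prop)]
    exact stdOp_congr _ _ _ _ _ _ _ _ (by ring) (fun z => by ring) (fun z => by ring)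
  -- the key formula for `B ^ k * S`
  have hkey : ∀ k : ℕ, B ^ k * S = stdOp R N ((l n : ℂ) * (1 - (a:ℂ) * (l n : ℂ)^2) ^ k)
      (cSeqC (l n : ℂ) (a : ℂ) k)
      (fun z => ((l n : ℂ) - z) * (1 - (a:ℂ) * ((l n : ℂ) - z)^2) ^ k) := by
    intro k
    induction k with
    | zero =>
      rw [pow_zero, one_mul, hS']
      exact stdOp_congr _ _ _ _ _ _ _ _ (by ring) (fun z => by simp [cSeqC])
        (fun z => by ring)
    | succ k ih =>
      rw [pow_succ', mul_assoc, ih, hB',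
        stdOp_mul _ _ _ _ _ _ _ _ (by fun_prop) (by fun_prop)
          (cSeqC_continuous _ _ _) (by fun_prop)]
      refine stdOp_congr _ _ _ _ _ _ _ _ (by ring) (fun z => ?_) (fun z => by ring)
      show _ = cSeqC (l n : ℂ) (a : ℂ) (k+1) z
      simp only [cSeqC]
  -- ## Norm estimates
  have hnormtop : ∀ k : ℕ, ‖(l n : ℂ) * (1 - (a:ℂ) * (l n : ℂ)^2) ^ k‖ ≤ l n * ρ ^ k := by
    intro k
    have hcoe : (l n : ℂ) * (1 - (a:ℂ) * (l n : ℂ)^2) ^ k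
        = ((l n * (1 - a * (l n)^2) ^ k : ℝ) : ℂ) := by push_cast; ring
    rw [hcoe, Complex.norm_real, Real.norm_eq_abs,
      abs_of_nonneg (mul_nonneg hlam.le (pow_nonneg hr0a k))]
    exact mul_le_mul_of_nonneg_left (pow_le_pow_left₀ hr0a hr0ρ k) hlam.le
  have hnormc : ∀ k : ℕ, ‖cfc (cSeqC (l n : ℂ) (a : ℂ) k) N‖ ≤ (1 + β * k) * ρ ^ k := by
    intro k
    have hβk : (0:ℝ) ≤ β * k := mul_nonneg hβ0 (Nat.cast_nonneg k)
    apply norm_cfc_le (by positivity)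
    intro x hx
    obtain ⟨r, hxr, hr0', hrLb, hrfar⟩ := hspec' x hx
    rw [hxr, cSeqC_coe, Complex.norm_real, Real.norm_eq_abs]
    have hWr : |l n - r| ≤ W := abs_le.mpr ⟨by simp only [hWdef]; linarith, by simp only [hWdef]; linarith⟩
    refine cR_bound (l n) a δ W β C2a ρ r hρ0.le hβ0 ?_ ?_ ?_ hW0.le hβρ k
    · rw [abs_of_nonneg hr0a]; exact hr0ρ
    · intro j
      exact dR_bound (l n) a δ W r hδpos ha.le hδW hWr haW hrfar j
    · rw [abs_mul, abs_of_pos ha]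
      have : |2 * l n - r| ≤ 2 * l n + Lb := abs_le.mpr ⟨by linarith, by linarith⟩
      calc a * |2 * l n - r| ≤ a * (2 * l n + Lb) := mul_le_mul_of_nonneg_left this ha.le
        _ = C2a := rfl
  have hnormd : ∀ k : ℕ,
      ‖cfc (fun z => ((l n : ℂ) - z) * (1 - (a:ℂ) * ((l n : ℂ) - z)^2) ^ k) N‖ ≤ W * ρ ^ k := by
    intro k
    apply norm_cfc_le (by positivity)
    intro x hx
    obtain ⟨r, hxr, hr0', hrLb, hrfar⟩ := hspec' x hx
    have hcoe : ((l n : ℂ) - (r:ℂ)) * (1 - (a:ℂ) * ((l n : ℂ) - (r:ℂ))^2) ^ k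
        = (((l n - r) * (1 - a * (l n - r)^2) ^ k : ℝ) : ℂ) := by push_cast; ring
    rw [hxr, hcoe, Complex.norm_real, Real.norm_eq_abs]
    have hWr : |l n - r| ≤ W := abs_le.mpr ⟨by simp only [hWdef]; linarith, by simp only [hWdef]; linarith⟩
    exact dR_bound (l n) a δ W r hδpos ha.le hδW hWr haW hrfar k
  -- the global bound
  set bnd : ℕ → ℝ := fun k => (l n + ‖R‖ * (1 + β * k) + W) * ρ ^ k with hbnddef
  have hnormBkS : ∀ k, ‖B ^ k * S‖ ≤ bnd k := by
    intro k
    rw [hkey k]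
    refine (stdOp_norm_le _ _ _ _ _).trans ?_
    have h2 := hnormc k
    have h3 := hnormd k
    calc ‖(l n : ℂ) * (1 - (a:ℂ) * (l n : ℂ)^2) ^ k‖
          + ‖R‖ * ‖cfc (cSeqC (l n : ℂ) (a : ℂ) k) N‖
          + ‖cfc (fun z => ((l n : ℂ) - z) * (1 - (a:ℂ) * ((l n : ℂ) - z)^2) ^ k) N‖
        ≤ l n * ρ ^ k + ‖R‖ * ((1 + β * k) * ρ ^ k) + W * ρ ^ k :=
          add_le_add (add_le_add (hnormtop k)
            (mul_le_mul_of_nonneg_left h2 (norm_nonneg R))) h3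
      _ = bnd k := by rw [hbnddef]; ring
  have hsummable : Summable bnd := by
    have h1 : Summable (fun k : ℕ => (l n + ‖R‖ + W) * ρ ^ k) :=
      (summable_geometric_of_lt_one hρ0.le hρ1).mul_left _
    have h2' := summable_pow_mul_geometric_of_norm_lt_one (R := ℝ) 1
      (r := ρ) (by rw [Real.norm_eq_abs, abs_of_pos hρ0]; exact hρ1)
    have h2 : Summable (fun k : ℕ => (‖R‖ * β) * ((k : ℝ) * ρ ^ k)) := by
      refine Summable.mul_left _ ?_
      simpa [pow_one] using h2'
    refine (h1.add h2).congr fun k => ?_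
    rw [hbnddef]; ring
  have hbnd_zero : Tendsto bnd atTop (nhds 0) := hsummable.tendsto_atTop_zero
  -- ## the approximating sequence and its limit
  set A : ℕ → (H × H) →L[ℂ] (H × H) := fun k => 1 - B ^ k with hAdef
  have hBsub : B - 1 = -((a:ℂ) • (S * S)) := by rw [hBdef]; abel
  have hABdiff : ∀ k, A k - A (k+1) = -((a:ℂ) • ((B ^ k * S) * S)) := by
    intro k
    have h1 : A k - A (k+1) = B ^ (k+1) - B ^ k := by simp only [hAdef]; abel
    have h2 : B ^ (k+1) - B ^ k = B ^ k * (B - 1) := by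
      calc B ^ (k+1) - B ^ k = B ^ k * B - B ^ k * 1 := by rw [pow_succ, mul_one]
        _ = B ^ k * (B - 1) := (mul_sub _ _ _).symm
    have e1 : B ^ k * -((a:ℂ) • (S * S)) = -(B ^ k * ((a:ℂ) • (S * S))) := mul_neg (B ^ k) ((a:ℂ) • (S * S))
    have e2 : B ^ k * ((a:ℂ) • (S * S)) = (a:ℂ) • (B ^ k * (S * S)) := mul_smul_comm (a:ℂ) (B ^ k) (S * S)
    have e3 : B ^ k * (S * S) = (B ^ k * S) * S := (mul_assoc (B ^ k) S S).symm
    rw [h1, h2, hBsub, e1, e2, e3]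
  have hdistsum : Summable (fun k => dist (A k) (A (k+1))) := by
    refine Summable.of_nonneg_of_le (fun k => dist_nonneg) (fun k => ?_)
      ((hsummable.mul_left (a * ‖S‖)))
    have h1 : ‖((a:ℝ):ℂ)‖ = a := by
      rw [Complex.norm_real, Real.norm_eq_abs, abs_of_pos ha]
    calc dist (A k) (A (k+1)) = ‖A k - A (k+1)‖ := dist_eq_norm (A k) (A (k+1))
      _ = ‖-((a:ℂ) • ((B ^ k * S) * S))‖ := by rw [hABdiff k]
      _ = a * ‖(B ^ k * S) * S‖ := by
          have h2 : ‖-((a:ℂ) • ((B ^ k * S) * S))‖ = ‖(a:ℂ) • ((B ^ k * S) * S)‖ := norm_neg ((a:ℂ) • ((B ^ k * S) * S))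
          have h3 : ‖(a:ℂ) • ((B ^ k * S) * S)‖ = ‖(a:ℂ)‖ * ‖(B ^ k * S) * S‖ :=
            @norm_smul ℂ ((H × H) →L[ℂ] (H × H)) _ _ _ NormedSpace.toNormSMulClass (a:ℂ) ((B ^ k * S) * S)
          rw [h2, h3, h1]
      _ ≤ a * (‖B ^ k * S‖ * ‖S‖) := by
          have h3 : ‖(B ^ k * S) * S‖ ≤ ‖B ^ k * S‖ * ‖S‖ := norm_mul_le (B ^ k * S) S
          exact mul_le_mul_of_nonneg_left h3 ha.le
      _ ≤ a * (bnd k * ‖S‖) := by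
          have hb := hnormBkS k
          have h2 := mul_le_mul_of_nonneg_right hb (norm_nonneg S)
          exact mul_le_mul_of_nonneg_left h2 ha.le
      _ = a * ‖S‖ * bnd k := by ring
  have hcauchy : CauchySeq A := cauchySeq_of_summable_dist hdistsum
  obtain ⟨E, hE⟩ := cauchySeq_tendsto_of_complete hcauchy
  -- A k * S → S  and  A k * S → E * S, so E * S = S
  have hASnorm : Tendsto (fun k => ‖A k * S - S‖) atTop (nhds 0) := by
    have hb : ∀ k, ‖A k * S - S‖ ≤ bnd k := by
      intro k
      have h1 : A k * S - S = -(B ^ k * S) := by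
        simp only [hAdef]; rw [sub_mul, one_mul]; abel
      have h2 : ‖-(B ^ k * S)‖ = ‖B ^ k * S‖ := norm_neg (B ^ k * S)
      rw [h1, h2]
      exact hnormBkS k
    exact squeeze_zero (fun k => norm_nonneg (A k * S - S)) hb hbnd_zero
  have hAE : Tendsto (fun k => ‖A k - E‖) atTop (nhds 0) :=
    (tendsto_iff_norm_sub_tendsto_zero (E := (H × H) →L[ℂ] (H × H))).mp hE
  have hAESnorm : Tendsto (fun k => ‖A k * S - E * S‖) atTop (nhds 0) := by
    have hb : ∀ k, ‖A k * S - E * S‖ ≤ ‖A k - E‖ * ‖S‖ := by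
      intro k
      calc ‖A k * S - E * S‖ = ‖(A k - E) * S‖ := by rw [sub_mul (A k) E S]
        _ ≤ ‖A k - E‖ * ‖S‖ := norm_mul_le (A k - E) S
    exact squeeze_zero (fun k => norm_nonneg (A k * S - E * S)) hb
      (by simpa using hAE.mul_const ‖S‖)
  have hES : E * S = S := by
    have hsumlim : Tendsto (fun k => ‖A k * S - E * S‖ + ‖A k * S - S‖) atTop (nhds 0) := by
      simpa using hAESnorm.add hASnorm
    have hge : ∀ k, ‖E * S - S‖ ≤ ‖A k * S - E * S‖ + ‖A k * S - S‖ := by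
      intro k
      have e : (A k * S - S) - (A k * S - E * S) = E * S - S := by abel
      calc ‖E * S - S‖ = ‖(A k * S - S) - (A k * S - E * S)‖ := by rw [e]
        _ ≤ ‖A k * S - S‖ + ‖A k * S - E * S‖ := norm_sub_le (A k * S - S) (A k * S - E * S)
        _ = ‖A k * S - E * S‖ + ‖A k * S - S‖ := add_comm _ _
    have h0 : ‖E * S - S‖ ≤ 0 := ge_of_tendsto' hsumlim hge
    have hd : dist (E * S) S = ‖E * S - S‖ := dist_eq_norm (E * S) S
    have h9 : dist (E * S) S = 0 := le_antisymm (hd ▸ h0) dist_nonneg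
    exact eq_of_dist_eq_zero h9
  -- ## membership in the span
  set Sp : Submodule ℂ ((H × H) →L[ℂ] (H × H)) :=
    Submodule.span ℂ {X : (H × H) →L[ℂ] (H × H) | ∃ m : ℕ, 1 ≤ m ∧ X = S ^ m} with hSpdef
  have hgen : ∀ m, 1 ≤ m → S ^ m ∈ Sp := fun m hm => Submodule.subset_span ⟨m, hm, rfl⟩
  have hmulS2 : ∀ x ∈ Sp, (S * S) * x ∈ Sp := by
    intro x hx
    induction hx using Submodule.span_induction with
    | mem y hy =>
      obtain ⟨m, hm, rfl⟩ := hy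
      have h : (S * S) * S ^ m = S ^ (2 + m) := by rw [← pow_two, ← pow_add]
      rw [h]
      exact hgen _ (by omega)
    | zero => rw [mul_zero]; exact Submodule.zero_mem _
    | add y z _ _ hy hz => rw [mul_add]; exact Submodule.add_mem _ hy hz
    | smul r y _ hy => rw [mul_smul_comm]; exact Submodule.smul_mem _ _ hy
  have hBkS2 : ∀ k, B ^ k * (S * S) ∈ Sp := by
    intro k
    induction k with
    | zero =>
      rw [pow_zero, one_mul]
      have := hgen 2 (by norm_num)
      rwa [pow_two] at this
    | succ k ih =>
      have hb2 : ∀ x : (H × H) →L[ℂ] (H × H), B * x = x - (a:ℂ) • ((S * S) * x) := by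
        intro x
        rw [hBdef, sub_mul, one_mul, smul_mul_assoc]
      have heq : B ^ (k+1) * (S * S)
          = B ^ k * (S * S) - (a:ℂ) • ((S * S) * (B ^ k * (S * S))) := by
        rw [pow_succ', mul_assoc, hb2]
      rw [heq]
      exact Submodule.sub_mem _ ih (Submodule.smul_mem _ _ (hmulS2 _ ih))
  have hAmem : ∀ k, A k ∈ Sp := by
    intro k
    induction k with
    | zero =>
      have h : A 0 = 0 := by simp only [hAdef]; simp
      rw [h]; exact Submodule.zero_mem _
    | succ k ih =>
      have hb : B ^ (k+1) = B ^ k - (a:ℂ) • (B ^ k * (S * S)) := by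
        have : B ^ (k+1) = B ^ k * B := pow_succ B k
        rw [this, hBdef, mul_sub, mul_one, mul_smul_comm]
      have heq : A (k+1) = A k + (a:ℂ) • (B ^ k * (S * S)) := by
        simp only [hAdef]
        rw [hb]
        abel
      rw [heq]
      exact Submodule.add_mem _ ih (Submodule.smul_mem _ _ (hBkS2 k))
  have hEmem : E ∈ closure (Sp : Set _) :=
    mem_closure_of_tendsto hE (Filter.Eventually.of_forall hAmem)
  -- ## E is a left identity on the closure
  have hEid : ∀ x ∈ closure (Sp : Set _), E * x = x := by
    have hlipw : LipschitzWith ‖E‖₊ (fun x : (H × H) →L[ℂ] (H × H) => E * x) := by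
      refine LipschitzWith.of_dist_le_mul (fun x y => ?_)
      have e1 : dist (E * x) (E * y) = ‖E * x - E * y‖ := dist_eq_norm (E * x) (E * y)
      have e2 : E * x - E * y = E * (x - y) := (mul_sub E x y).symm
      have e3 : ‖E * (x - y)‖ ≤ ‖E‖ * ‖x - y‖ := norm_mul_le E (x - y)
      have e4 : dist x y = ‖x - y‖ := dist_eq_norm x y
      rw [e1, e2, e4, coe_nnnorm]
      exact e3
    have hlip : Continuous (fun x : (H × H) →L[ℂ] (H × H) => E * x) := hlipw.continuous
    have hcl : IsClosed {x : (H × H) →L[ℂ] (H × H) | E * x = x} :=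
      isClosed_eq hlip continuous_id
    have hsub : (Sp : Set _) ⊆ {x | E * x = x} := by
      intro y hy
      induction hy using Submodule.span_induction with
      | mem y hy =>
        obtain ⟨m, hm, rfl⟩ := hy
        obtain ⟨j, rfl⟩ : ∃ j, m = j + 1 := ⟨m - 1, by omega⟩
        show E * S ^ (j+1) = S ^ (j+1)
        rw [pow_succ', ← mul_assoc, hES]
      | zero => show E * 0 = 0; rw [mul_zero]
      | add y z _ _ hy hz =>
        show E * (y + z) = y + z
        rw [mul_add, hy, hz]
      | smul r y _ hy =>
        show E * (r • y) = r • y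
        rw [mul_smul_comm, hy]
    exact fun x hx => closure_minimal hsub hcl hx
  -- ## conclusion
  refine ⟨fun _ => E, ‖E‖, fun k => le_refl _, fun k => hEmem, fun x hx => ?_⟩
  have := hEid x hx
  simp only [this]
  exact tendsto_const_nhds
end
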